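/- Let p ≥ 0 be an integer, let c > 0, let m ≥ 2, let b_1 < ⋯ < b_m be distinct real numbers, let 1 ≤ τ < m, and let t ∈ (b_τ, b_{τ+1}). Let B_1, …, B_m be real coefficients and define ψ(x) = Σ_{j=1}^{m} B_j · K(x, b_j), ψ_1(x) = Σ_{j=1}^{τ} B_j · K(x, b_j), and ψ_2(x) = Σ_{j=τ+1}^{m} B_j · K(x, b_j). If there exists ε > 0 such that ψ(x) = 0 for all x ∈ (t − ε, t + ε), then: ψ_1(x) = ψ(x) for all x < b_τ and ψ_1(x) = 0 for all x ≥ b_τ; and ψ_2(x) = 0 for all x ≤ b_{τ+1} and ψ_2(x) = ψ(x) for all x > b_{τ+1}. -/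

import Mathlib

/-- The polynomial factor `P_p(u) = (p! / (2p)!) ∑_{j=0}^{p} ((p+j)! / (j! (p-j)!)) (2cu)^{p-j}`
appearing in the half-integer Matérn kernel. -/
noncomputable def maternPoly (p : ℕ) (c : ℝ) (u : ℝ) : ℝ :=
  ((p.factorial : ℝ) / ((2 * p).factorial : ℝ)) *
    ∑ j ∈ Finset.range (p + 1),
      (((p + j).factorial : ℝ) / ((j.factorial : ℝ) * ((p - j).factorial : ℝ))) *
        (2 * c * u) ^ (p - j)

/-- The half-integer Matérn kernel with smoothness `ν = p + 1/2`:
`K(x, x') = P_p(|x - x'|) exp (-c |x - x'|)`. -/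
noncomputable def maternKernel (p : ℕ) (c : ℝ) (x x' : ℝ) : ℝ :=
  maternPoly p c |x - x'| * Real.exp (-(c * |x - x'|))

open Polynomial Filter Real Set

noncomputable def matP (p : ℕ) (c : ℝ) : Polynomial ℝ :=
  Polynomial.C ((p.factorial : ℝ) / ((2 * p).factorial : ℝ)) *
    ∑ j ∈ Finset.range (p + 1),
      Polynomial.C (((p + j).factorial : ℝ) / ((j.factorial : ℝ) * ((p - j).factorial : ℝ))) *
        (Polynomial.C (2 * c) * Polynomial.X) ^ (p - j)

lemma matP_eval (p : ℕ) (c u : ℝ) :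
    (matP p c).eval u = maternPoly p c u := by
  simp [matP, maternPoly, Polynomial.eval_finset_sum, mul_pow]

lemma poly_exp_tendsto (P : Polynomial ℝ) {c : ℝ} (hc : 0 < c) :
    Tendsto (fun x => P.eval x * Real.exp (-(c * x))) atTop (nhds 0) := by
  have hc' : c ≠ 0 := ne_of_gt hc
  have key : (fun x => P.eval x * Real.exp (-(c * x))) =
      (fun y => (P.comp (Polynomial.C c⁻¹ * Polynomial.X)).eval y / Real.exp y) ∘ (fun x => c * x) := by
    funext x
    simp [Polynomial.eval_comp, Real.exp_neg, div_eq_mul_inv, hc'.symm, inv_mul_cancel_left₀ hc']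
  rw [key]
  exact (Polynomial.tendsto_div_exp_atTop _).comp (tendsto_id.const_mul_atTop hc)

lemma poly_eq_zero_of_tendsto (S : Polynomial ℝ) (h : Tendsto (fun x => S.eval x) atTop (nhds 0)) :
    S = 0 := by
  by_contra hS
  rcases le_or_gt S.degree 0 with hd | hd
  · have : S = Polynomial.C (S.coeff 0) := Polynomial.eq_C_of_degree_le_zero hd
    rw [this] at h
    simp only [Polynomial.eval_C] at h
    have h0 : S.coeff 0 = 0 := (tendsto_nhds_unique h tendsto_const_nhds).symm
    exact hS (by rw [this, h0, map_zero])
  · exact not_tendsto_nhds_of_tendsto_atTop (Polynomial.abs_tendsto_atTop S hd) _ (h.abs.congr (by simp))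

lemma key_separation (Q R : Polynomial ℝ) {c : ℝ} (hc : 0 < c) {s e : ℝ} (hse : s < e)
    (h : ∀ x ∈ Set.Ioo s e, Q.eval x * Real.exp (-(c * x)) + R.eval x * Real.exp (c * x) = 0) :
    ∀ x : ℝ, Q.eval x = 0 ∧ R.eval x = 0 := by
  set g : ℝ → ℝ := fun x => Q.eval x + R.eval x * Real.exp (2 * c * x) with hg_def
  have hgJ : ∀ x ∈ Set.Ioo s e, g x = 0 := by
    intro x hx
    have h1 := h x hx
    have : g x = (Q.eval x * Real.exp (-(c * x)) + R.eval x * Real.exp (c * x)) * Real.exp (c * x) := by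
      rw [add_mul, mul_assoc, mul_assoc, ← Real.exp_add, ← Real.exp_add, neg_add_cancel,
        Real.exp_zero, mul_one]
      simp only [hg_def]
      ring_nf
    rw [this, h1, zero_mul]
  have hganal : AnalyticOnNhd ℝ g Set.univ := by
    intro x _
    exact ((AnalyticOnNhd.eval_polynomial (𝕜 := ℝ) Q x (Set.mem_univ x)).add
      ((AnalyticOnNhd.eval_polynomial (𝕜 := ℝ) R x (Set.mem_univ x)).mul
        ((analyticAt_const.mul analyticAt_id).rexp)))
  have hz₀ : (s + e) / 2 ∈ Set.Ioo s e := ⟨by linarith, by linarith⟩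
  have hev : g =ᶠ[nhds ((s + e) / 2)] 0 :=
    Filter.eventuallyEq_of_mem (isOpen_Ioo.mem_nhds hz₀) hgJ
  have hg0 : ∀ x : ℝ, g x = 0 := fun x =>
    hganal.eqOn_zero_of_preconnected_of_eventuallyEq_zero isPreconnected_univ
      (Set.mem_univ _) hev (Set.mem_univ x)
  -- Q vanishes
  have hQR : ∀ x : ℝ, Q.eval x = -(R.eval x * Real.exp (2 * c * x)) := by
    intro x; have := hg0 x; simp only [hg_def] at this; linarith
  have hQ0 : ∀ x : ℝ, Q.eval x = 0 := by
    have hS : Q.comp (-Polynomial.X) = 0 := by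
      apply poly_eq_zero_of_tendsto
      have : Tendsto (fun y : ℝ => -((R.comp (-Polynomial.X)).eval y * Real.exp (-(2 * c * y))))
          atTop (nhds 0) := by
        simpa using (poly_exp_tendsto (R.comp (-Polynomial.X)) (by linarith : (0:ℝ) < 2 * c)).neg
      refine this.congr fun y => ?_
      simp only [Polynomial.eval_comp, Polynomial.eval_neg, Polynomial.eval_X]
      rw [hQR (-y)]
      ring_nf
    intro x
    have := congrArg (Polynomial.eval (-x)) hS
    simpa [Polynomial.eval_comp] using this
  intro x
  refine ⟨hQ0 x, ?_⟩
  have := hg0 x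
  simp only [hg_def, hQ0 x, zero_add, mul_eq_zero] at this
  rcases this with h' | h'
  · exact h'
  · exact absurd h' (Real.exp_ne_zero _)

/-- (Splitting lemma.) Let `p ≥ 0`, `c > 0`, `b_1 < ⋯ < b_m` (`m ≥ 2`),
`1 ≤ τ < m`, and `t ∈ (b_τ, b_{τ+1})`. Here `τ = i + 1` with the points `0`-indexed:
`b_τ = b i`, `b_{τ+1} = b (i+1)`, `ψ1` sums the first `τ` terms (`j ≤ i`) and `ψ2` the
remaining ones (`j > i`). If `ψ(x) = ∑_j B_j K(x, b_j)` vanishes on `(t - ε, t + ε)` for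
some `ε > 0`, then `ψ1 = ψ` on `(-∞, b_τ)` and `ψ1 = 0` on `[b_τ, ∞)`, while `ψ2 = 0` on
`(-∞, b_{τ+1}]` and `ψ2 = ψ` on `(b_{τ+1}, ∞)`. -/
theorem matern_sum_vanishing_on_interval_splits
    (p : ℕ) (c : ℝ) (hc : 0 < c)
    (m : ℕ) (hm : 2 ≤ m)
    (b : Fin m → ℝ) (hb : StrictMono b)
    (i : ℕ) (hi : i + 1 < m)
    (t : ℝ) (ht : t ∈ Set.Ioo (b ⟨i, by omega⟩) (b ⟨i + 1, hi⟩))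
    (B : Fin m → ℝ)
    (ψ ψ1 ψ2 : ℝ → ℝ)
    (hψ : ∀ x, ψ x = ∑ j, B j * maternKernel p c x (b j))
    (hψ1 : ∀ x, ψ1 x = ∑ j ∈ Finset.univ.filter (fun j : Fin m => (j : ℕ) ≤ i),
      B j * maternKernel p c x (b j))
    (hψ2 : ∀ x, ψ2 x = ∑ j ∈ Finset.univ.filter (fun j : Fin m => i < (j : ℕ)),
      B j * maternKernel p c x (b j))
    (ε : ℝ) (hε : 0 < ε)
    (hzero : ∀ x ∈ Set.Ioo (t - ε) (t + ε), ψ x = 0) :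
    (∀ x, x < b ⟨i, by omega⟩ → ψ1 x = ψ x) ∧
    (∀ x, b ⟨i, by omega⟩ ≤ x → ψ1 x = 0) ∧
    (∀ x, x ≤ b ⟨i + 1, hi⟩ → ψ2 x = 0) ∧
    (∀ x, b ⟨i + 1, hi⟩ < x → ψ2 x = ψ x) := by
  obtain ⟨ht1, ht2⟩ := ht
  have hlt : b ⟨i, by omega⟩ < b ⟨i + 1, hi⟩ := hb (by simp [Fin.lt_def])
  set Q : Polynomial ℝ := ∑ j ∈ Finset.univ.filter (fun j : Fin m => (j : ℕ) ≤ i),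
    Polynomial.C (B j * Real.exp (c * b j)) *
      (matP p c).comp (Polynomial.X - Polynomial.C (b j)) with hQdef
  set R : Polynomial ℝ := ∑ j ∈ Finset.univ.filter (fun j : Fin m => i < (j : ℕ)),
    Polynomial.C (B j * Real.exp (-(c * b j))) *
      (matP p c).comp (Polynomial.C (b j) - Polynomial.X) with hRdef
  have hterm1 : ∀ (j : Fin m) (x : ℝ), b j ≤ x →
      B j * maternKernel p c x (b j)
        = (B j * Real.exp (c * b j)) * (matP p c).eval (x - b j) * Real.exp (-(c * x)) := by
    intro j x hj
    rw [maternKernel, abs_of_nonneg (by linarith : (0:ℝ) ≤ x - b j), matP_eval,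
      show -(c * (x - b j)) = c * b j + -(c * x) by ring, Real.exp_add]
    ring
  have hterm2 : ∀ (j : Fin m) (x : ℝ), x ≤ b j →
      B j * maternKernel p c x (b j)
        = (B j * Real.exp (-(c * b j))) * (matP p c).eval (b j - x) * Real.exp (c * x) := by
    intro j x hj
    rw [maternKernel, abs_of_nonpos (by linarith : x - b j ≤ 0), neg_sub, matP_eval,
      show -(c * (b j - x)) = -(c * b j) + c * x by ring, Real.exp_add]
    ring
  have hψ1Q : ∀ x, b ⟨i, by omega⟩ ≤ x → ψ1 x = Q.eval x * Real.exp (-(c * x)) := by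
    intro x hx
    rw [hψ1 x, hQdef, Polynomial.eval_finset_sum, Finset.sum_mul]
    apply Finset.sum_congr rfl
    intro j hj
    simp only [Finset.mem_filter, Finset.mem_univ, true_and] at hj
    have hbj : b j ≤ x := le_trans (hb.monotone (Fin.le_def.mpr hj)) hx
    rw [hterm1 j x hbj]
    simp only [Polynomial.eval_mul, Polynomial.eval_C, Polynomial.eval_comp,
      Polynomial.eval_sub, Polynomial.eval_X]
  have hψ2R : ∀ x, x ≤ b ⟨i + 1, hi⟩ → ψ2 x = R.eval x * Real.exp (c * x) := by
    intro x hx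
    rw [hψ2 x, hRdef, Polynomial.eval_finset_sum, Finset.sum_mul]
    apply Finset.sum_congr rfl
    intro j hj
    simp only [Finset.mem_filter, Finset.mem_univ, true_and] at hj
    have hbj : x ≤ b j := le_trans hx (hb.monotone (Fin.le_def.mpr hj))
    rw [hterm2 j x hbj]
    simp only [Polynomial.eval_mul, Polynomial.eval_C, Polynomial.eval_comp,
      Polynomial.eval_sub, Polynomial.eval_X]
  have hsplit : ∀ x, ψ x = ψ1 x + ψ2 x := by
    intro x
    rw [hψ x, hψ1 x, hψ2 x,
      ← Finset.sum_filter_add_sum_filter_not Finset.univ (fun j : Fin m => (j : ℕ) ≤ i)]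
    congr 1
    apply Finset.sum_congr _ fun _ _ => rfl
    ext j
    simp [not_le]
  have hlo : max (t - ε) (b ⟨i, by omega⟩) < min (t + ε) (b ⟨i + 1, hi⟩) := by
    apply max_lt <;> apply lt_min <;> linarith
  have hJ : ∀ x ∈ Set.Ioo (max (t - ε) (b ⟨i, by omega⟩)) (min (t + ε) (b ⟨i + 1, hi⟩)),
      Q.eval x * Real.exp (-(c * x)) + R.eval x * Real.exp (c * x) = 0 := by
    intro x hx
    obtain ⟨hx1, hx2⟩ := hx
    have h1 : b ⟨i, by omega⟩ ≤ x := le_of_lt (lt_of_le_of_lt (le_max_right _ _) hx1)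
    have h2 : x ≤ b ⟨i + 1, hi⟩ := le_of_lt (lt_of_lt_of_le hx2 (min_le_right _ _))
    have h0 : ψ x = 0 := hzero x ⟨lt_of_le_of_lt (le_max_left _ _) hx1,
      lt_of_lt_of_le hx2 (min_le_left _ _)⟩
    rw [← hψ1Q x h1, ← hψ2R x h2, ← hsplit x]
    exact h0
  have hQR0 := key_separation Q R hc hlo hJ
  refine ⟨?_, ?_, ?_, ?_⟩
  · intro x hx
    have h2 : ψ2 x = 0 := by
      rw [hψ2R x (le_of_lt (lt_trans hx hlt)), (hQR0 x).2, zero_mul]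
    rw [hsplit x, h2, add_zero]
  · intro x hx
    rw [hψ1Q x hx, (hQR0 x).1, zero_mul]
  · intro x hx
    rw [hψ2R x hx, (hQR0 x).2, zero_mul]
  · intro x hx
    have h1 : ψ1 x = 0 := by
      rw [hψ1Q x (le_of_lt (lt_trans hlt hx)), (hQR0 x).1, zero_mul]
    rw [hsplit x, h1, zero_add]
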